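/- Let k > 0 and a ∈ ℝ with |a| ≤ k. Then for every n ∈ ℕ, every continuous input u : [0,∞) → ℝ, every ξ = (ξ_1,…,ξ_n) ∈ ℝ^n, and every solution (x_1,…,x_n) of the linear string with b = 0 (i.e., x_i'(t) = a·x_{i−1}(t) − k·x_i(t) with x_0(t) := u(t)) and x_i(0) = ξ_i, the estimate (∫_0^t x_i(s)² ds)^{1/2} ≤ (|a|/k)·(∫_0^t u(s)² ds)^{1/2} + (1/√k)·Σ_{j=1}^{n} |ξ_j| holds for all t ≥ 0 and all i = 1,…,n. -/

import Mathlib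

/-- The `L²` norm of a real-valued signal on the interval `[0, t]`. -/
noncomputable def l2Norm (y : ℝ → ℝ) (t : ℝ) : ℝ :=
  Real.sqrt (∫ s in (0:ℝ)..t, (y s) ^ 2)

lemma l2Norm_nonneg (y : ℝ → ℝ) (t : ℝ) : 0 ≤ l2Norm y t := Real.sqrt_nonneg _

lemma sqrt_add_le' {x y : ℝ} (hx : 0 ≤ x) (hy : 0 ≤ y) :
    Real.sqrt (x + y) ≤ Real.sqrt x + Real.sqrt y := by
  rw [← Real.sqrt_sq (by positivity : (0:ℝ) ≤ Real.sqrt x + Real.sqrt y)]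
  apply Real.sqrt_le_sqrt
  nlinarith [Real.sq_sqrt hx, Real.sq_sqrt hy, Real.sqrt_nonneg x, Real.sqrt_nonneg y]

/-- One step of the chain estimate. -/
lemma step_estimate (k a : ℝ) (hk : 0 < k) (x y : ℝ → ℝ)
    (hx : ContinuousOn x (Set.Ici 0))
    (hy : ∀ t ≥ (0:ℝ), HasDerivAt y (a * x t - k * y t) t)
    (t : ℝ) (ht : 0 ≤ t) :
    l2Norm y t ≤ (1 / Real.sqrt k) * |y 0| + (|a| / k) * l2Norm x t := by
  have hIcc : Set.uIcc (0:ℝ) t = Set.Icc 0 t := Set.uIcc_of_le ht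
  have hsub : Set.uIcc (0:ℝ) t ⊆ Set.Ici 0 := by
    rw [hIcc]; exact fun s hs => hs.1
  have hyc : ContinuousOn y (Set.Ici 0) := fun s hs =>
    ((hy s hs).continuousAt).continuousWithinAt
  have hxc' : ContinuousOn x (Set.uIcc 0 t) := hx.mono hsub
  have hyc' : ContinuousOn y (Set.uIcc 0 t) := hyc.mono hsub
  -- derivative of y^2
  have hd : ∀ s ∈ Set.uIcc (0:ℝ) t,
      HasDerivAt (fun r => y r ^ 2) (2 * y s * (a * x s - k * y s)) s := by
    intro s hs
    have hs0 : (0:ℝ) ≤ s := hsub hs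
    have h : HasDerivAt (fun r => y r ^ 2) (((2:ℕ):ℝ) * y s ^ (2 - 1) * (a * x s - k * y s)) s :=
      (hy s hs0).fun_pow 2
    convert h using 1
    push_cast
    ring
  have hdc : ContinuousOn (fun s => 2 * y s * (a * x s - k * y s)) (Set.uIcc 0 t) := by
    apply ContinuousOn.mul
    · exact (continuousOn_const.mul hyc')
    · exact (continuousOn_const.mul hxc').sub (continuousOn_const.mul hyc')
  have hdI : IntervalIntegrable (fun s => 2 * y s * (a * x s - k * y s)) MeasureTheory.volume 0 t :=
    hdc.intervalIntegrable
  have hftc : ∫ s in (0:ℝ)..t, 2 * y s * (a * x s - k * y s) = y t ^ 2 - y 0 ^ 2 :=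
    intervalIntegral.integral_eq_sub_of_hasDerivAt hd hdI
  have hx2I : IntervalIntegrable (fun s => x s ^ 2) MeasureTheory.volume 0 t :=
    (hxc'.pow 2).intervalIntegrable
  have hy2I : IntervalIntegrable (fun s => y s ^ 2) MeasureTheory.volume 0 t :=
    (hyc'.pow 2).intervalIntegrable
  have hrhsI : IntervalIntegrable (fun s => a ^ 2 / k * x s ^ 2 - k * y s ^ 2)
      MeasureTheory.volume 0 t :=
    (hx2I.const_mul _).sub (hy2I.const_mul _)
  have hmono : ∫ s in (0:ℝ)..t, 2 * y s * (a * x s - k * y s)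
      ≤ ∫ s in (0:ℝ)..t, (a ^ 2 / k * x s ^ 2 - k * y s ^ 2) := by
    apply intervalIntegral.integral_mono_on ht hdI hrhsI
    intro s _
    have hq : k * (a ^ 2 / k) = a ^ 2 := by field_simp
    nlinarith [sq_nonneg (a * x s - k * y s), hk]
  have hsum : ∫ s in (0:ℝ)..t, (a ^ 2 / k * x s ^ 2 - k * y s ^ 2)
      = a ^ 2 / k * (∫ s in (0:ℝ)..t, x s ^ 2) - k * ∫ s in (0:ℝ)..t, y s ^ 2 := by
    rw [intervalIntegral.integral_sub (hx2I.const_mul _) (hy2I.const_mul _),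
      intervalIntegral.integral_const_mul, intervalIntegral.integral_const_mul]
  set X := ∫ s in (0:ℝ)..t, x s ^ 2 with hX
  set Y := ∫ s in (0:ℝ)..t, y s ^ 2 with hY
  have hXnn : 0 ≤ X := intervalIntegral.integral_nonneg ht (fun s _ => sq_nonneg _)
  have hYnn : 0 ≤ Y := intervalIntegral.integral_nonneg ht (fun s _ => sq_nonneg _)
  have hkey : Y ≤ y 0 ^ 2 / k + a ^ 2 / k ^ 2 * X := by
    have h1 : y t ^ 2 - y 0 ^ 2 ≤ a ^ 2 / k * X - k * Y := by
      rw [← hftc]; rw [← hsum] at *; exact hmono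
    have h2 : 0 ≤ y t ^ 2 := sq_nonneg _
    have hq1 : k * (y 0 ^ 2 / k) = y 0 ^ 2 := by field_simp
    have hq2 : k * (a ^ 2 / k ^ 2) = a ^ 2 / k := by field_simp
    nlinarith
  have h3 : l2Norm y t ≤ Real.sqrt (y 0 ^ 2 / k + a ^ 2 / k ^ 2 * X) := by
    unfold l2Norm
    exact Real.sqrt_le_sqrt hkey
  have h4 : Real.sqrt (y 0 ^ 2 / k + a ^ 2 / k ^ 2 * X)
      ≤ Real.sqrt (y 0 ^ 2 / k) + Real.sqrt (a ^ 2 / k ^ 2 * X) :=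
    sqrt_add_le' (by positivity) (by positivity)
  have h5 : Real.sqrt (y 0 ^ 2 / k) = (1 / Real.sqrt k) * |y 0| := by
    rw [Real.sqrt_div (sq_nonneg _), Real.sqrt_sq_eq_abs]
    ring
  have h6 : Real.sqrt (a ^ 2 / k ^ 2 * X) = (|a| / k) * l2Norm x t := by
    rw [Real.sqrt_mul (by positivity), show a ^ 2 / k ^ 2 = (a / k) ^ 2 by ring,
      Real.sqrt_sq_eq_abs, abs_div, abs_of_pos hk]
    rfl
  calc l2Norm y t ≤ _ := h3
    _ ≤ _ := h4
    _ = _ := by rw [h5, h6]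

/-- Example 1 (one-directional case `b = 0`): the linear string
`ẋᵢ = a x_{i−1} − k xᵢ` is `L²` string stable when `|a| ≤ k`, with the explicit
estimate `‖xᵢ‖_{[0,t],2} ≤ (|a|/k) ‖u‖_{[0,t],2} + (1/√k) ∑ⱼ |ξⱼ|`. -/
theorem linear_string_one_directional (k a : ℝ) (hk : 0 < k) (ha : |a| ≤ k) :
    ∀ n : ℕ, ∀ u : ℝ → ℝ, ContinuousOn u (Set.Ici 0) →
      ∀ ξ : ℕ → ℝ, ∀ x : ℕ → ℝ → ℝ,
        (∀ t, x 0 t = u t) →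
        (∀ i, 1 ≤ i → i ≤ n → x i 0 = ξ i ∧
          ∀ t ≥ (0:ℝ), HasDerivAt (x i) (a * x (i - 1) t - k * x i t) t) →
        ∀ i, 1 ≤ i → i ≤ n → ∀ t ≥ (0:ℝ),
          l2Norm (x i) t ≤
            (|a| / k) * l2Norm u t + (1 / Real.sqrt k) * ∑ j ∈ Finset.Icc 1 n, |ξ j| := by
  intro n u hu ξ x h0 hx
  have hr0 : 0 ≤ |a| / k := by positivity
  have hr1 : |a| / k ≤ 1 := (div_le_one hk).mpr ha
  have hs0 : 0 ≤ 1 / Real.sqrt k := by positivity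
  have key : ∀ i, 1 ≤ i → i ≤ n → ∀ t, 0 ≤ t →
      l2Norm (x i) t ≤
        (|a| / k) * l2Norm u t + (1 / Real.sqrt k) * ∑ j ∈ Finset.Icc 1 i, |ξ j| := by
    intro i hi
    induction i, hi using Nat.le_induction with
    | base =>
      intro hn t ht
      have hder : ∀ s ≥ (0:ℝ), HasDerivAt (x 1) (a * u s - k * x 1 s) s := by
        intro s hs
        have := (hx 1 (by omega) hn).2 s hs
        simpa [h0] using this
      have := step_estimate k a hk u (x 1) hu hder t ht
      have h01 : x 1 0 = ξ 1 := (hx 1 (by omega) hn).1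
      simp only [Finset.Icc_self, Finset.sum_singleton]
      rw [h01] at this
      linarith
    | succ i hi IH =>
      intro hn t ht
      have hin : i ≤ n := by omega
      have hxi := hx i hi hin
      have hxic : ContinuousOn (x i) (Set.Ici 0) := fun s hs =>
        ((hxi.2 s hs).continuousAt).continuousWithinAt
      have hder : ∀ s ≥ (0:ℝ), HasDerivAt (x (i+1)) (a * x i s - k * x (i+1) s) s := by
        intro s hs
        have := (hx (i+1) (by omega) hn).2 s hs
        simpa using this
      have hstep := step_estimate k a hk (x i) (x (i+1)) hxic hder t ht
      have h01 : x (i+1) 0 = ξ (i+1) := (hx (i+1) (by omega) hn).1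
      rw [h01] at hstep
      have hIH := IH hin t ht
      have hsum : ∑ j ∈ Finset.Icc 1 (i+1), |ξ j|
          = (∑ j ∈ Finset.Icc 1 i, |ξ j|) + |ξ (i+1)| :=
        Finset.sum_Icc_succ_top (by omega) _
      have hu0 : 0 ≤ l2Norm u t := l2Norm_nonneg _ _
      have hS0 : 0 ≤ ∑ j ∈ Finset.Icc 1 i, |ξ j| :=
        Finset.sum_nonneg fun j _ => abs_nonneg _
      rw [hsum]
      have hxinn : 0 ≤ l2Norm (x i) t := l2Norm_nonneg _ _
      nlinarith [mul_le_mul_of_nonneg_left hIH hr0]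
  intro i hi hin t ht
  have h := key i hi hin t ht
  have hsle : ∑ j ∈ Finset.Icc 1 i, |ξ j| ≤ ∑ j ∈ Finset.Icc 1 n, |ξ j| :=
    Finset.sum_le_sum_of_subset_of_nonneg
      (Finset.Icc_subset_Icc_right hin) (fun j _ _ => abs_nonneg _)
  have := mul_le_mul_of_nonneg_left hsle hs0
  linarith
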